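/- arXiv:2202.06232 — 7 statements merged into one kernel-verified Lean document; each statement's English description precedes it below -/
import Mathlib

section
/- Let H be a real Hilbert space, U ⊆ ℝᵏ open, φ : U → H Fréchet differentiable at w ∈ U with injective differential Dφ(w), and F : H → ℝ Fréchet differentiable at φ(w) with gradient ∇F(φ(w)) ∈ H. Set b_i = Dφ(w)(e_i) for the standard basis e₁,…,e_k of ℝᵏ, let g̃ be the k×k pullback metric matrix g̃_{ij} = ⟨b_i, b_j⟩_H, and let F̃ = F ∘ φ. Then Dφ(w) applied to the natural gradient vector Σ_{i,j} (g̃⁻¹)_{ij} ∂_i F̃(w) e_j ∈ ℝᵏ equals the orthogonal projection of ∇F(φ(w)) onto the subspace span{b₁,…,b_k} = range Dφ(w). -/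
open scoped RealInnerProductSpace

/-- Pullback/natural gradient: if `φ : U → H` is Fréchet differentiable at `w` with injective
differential `Dφ`, `F : H → ℝ` is differentiable at `φ w`, `b i = Dφ eᵢ`, and `g̃` is the
pullback metric (Gram) matrix `g̃ᵢⱼ = ⟪b i, b j⟫`, then `Dφ` applied to the natural gradient
`∑ i j, (g̃⁻¹)ᵢⱼ ∂ᵢ(F ∘ φ)(w) eⱼ` equals the orthogonal projection of the gradient `∇F(φ w)`
onto `span {b₁, …, b_k}`. -/
theorem stmt_1 {H : Type*} [NormedAddCommGroup H] [InnerProductSpace ℝ H] [CompleteSpace H]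
    {k : ℕ} {U : Set (EuclideanSpace ℝ (Fin k))} (hU : IsOpen U)
    {φ : EuclideanSpace ℝ (Fin k) → H} {w : EuclideanSpace ℝ (Fin k)} (hw : w ∈ U)
    {Dφ : EuclideanSpace ℝ (Fin k) →L[ℝ] H} (hφ : HasFDerivAt φ Dφ w)
    (hinj : Function.Injective Dφ)
    {F : H → ℝ} (hF : DifferentiableAt ℝ F (φ w))
    (b : Fin k → H) (hb : ∀ i, b i = Dφ (EuclideanSpace.single i 1))
    [FiniteDimensional ℝ (Submodule.span ℝ (Set.range b))]
    (g : Matrix (Fin k) (Fin k) ℝ) (hg : ∀ i j, g i j = ⟪b i, b j⟫) :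
    Dφ (∑ i, ∑ j, (g⁻¹ i j * fderiv ℝ (F ∘ φ) w (EuclideanSpace.single i 1)) •
          EuclideanSpace.single j 1)
      = (Submodule.orthogonalProjectionOnto (Submodule.span ℝ (Set.range b)) (gradient F (φ w)) : H) := by
  classical
  set S := Submodule.span ℝ (Set.range b) with hS
  -- linear independence of b
  have hlin : LinearIndependent ℝ b := by
    have hbe : b = ⇑Dφ ∘ (fun i => (EuclideanSpace.single i 1 : EuclideanSpace ℝ (Fin k))) := by
      funext i; simp [hb i]
    have h1 : LinearIndependent ℝ
        (fun i => (EuclideanSpace.single i 1 : EuclideanSpace ℝ (Fin k))) := by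
      have heq : (fun i => (EuclideanSpace.single i 1 : EuclideanSpace ℝ (Fin k)))
          = ⇑(EuclideanSpace.basisFun (Fin k) ℝ) := by
        funext i; rw [EuclideanSpace.basisFun_apply]
      rw [heq]
      exact (EuclideanSpace.basisFun (Fin k) ℝ).toBasis.linearIndependent
    rw [hbe]
    exact h1.map' Dφ.toLinearMap (LinearMap.ker_eq_bot.2 hinj)
  -- partial derivatives
  have hcomp : fderiv ℝ (F ∘ φ) w = (fderiv ℝ F (φ w)).comp Dφ :=
    (hF.hasFDerivAt.comp w hφ).fderiv
  have hpart : ∀ i, fderiv ℝ (F ∘ φ) w (EuclideanSpace.single i 1)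
      = ⟪gradient F (φ w), b i⟫ := by
    intro i
    rw [hcomp, ContinuousLinearMap.comp_apply, ← hb i, gradient,
      InnerProductSpace.toDual_symm_apply]
  -- invertibility of g
  have hgu : IsUnit g := by
    rw [← Matrix.mulVec_injective_iff_isUnit]
    have hker : ∀ c, g.mulVec c = 0 → c = 0 := by
      intro c hc
      have hz : (∑ j, c j • b j) = 0 := by
        have h0 : ⟪∑ j, c j • b j, ∑ j, c j • b j⟫ = 0 := by
          rw [inner_sum]
          have hj : ∀ j, ⟪∑ i, c i • b i, c j • b j⟫ = c j * (g.mulVec c) j := by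
            intro j
            rw [sum_inner, Matrix.mulVec]
            simp only [real_inner_smul_left, real_inner_smul_right]
            rw [dotProduct, Finset.mul_sum]
            congr 1; funext i
            rw [hg j i, real_inner_comm]
            ring
          simp only [hj, hc]
          simp
        exact inner_self_eq_zero.mp h0
      have := Fintype.linearIndependent_iff.mp hlin c hz
      funext j; exact this j
    intro x y hxy
    have h0 : g.mulVec (x - y) = 0 := by rw [Matrix.mulVec_sub, hxy, sub_self]
    exact sub_eq_zero.mp (hker _ h0)
  have hinv : g⁻¹ * g = 1 := Matrix.nonsing_inv_mul g ((Matrix.isUnit_iff_isUnit_det g).mp hgu)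
  -- rewrite the LHS as a combination of the b j
  set a : Fin k → ℝ := fun i => ⟪gradient F (φ w), b i⟫ with ha
  have hLHS : Dφ (∑ i, ∑ j, (g⁻¹ i j * fderiv ℝ (F ∘ φ) w (EuclideanSpace.single i 1)) •
          EuclideanSpace.single j 1) = ∑ i, ∑ j, (g⁻¹ i j * a i) • b j := by
    rw [map_sum]
    congr 1; funext i
    rw [map_sum]
    congr 1; funext j
    rw [ContinuousLinearMap.map_smul, hpart i, ← hb j]
  rw [hLHS]
  symm
  rw [← Submodule.starProjection_apply]
  apply Submodule.eq_starProjection_of_mem_of_inner_eq_zero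
  · exact Submodule.sum_mem _ fun i _ => Submodule.sum_mem _ fun j _ =>
      Submodule.smul_mem _ _ (Submodule.subset_span (Set.mem_range_self j))
  · intro v hv
    have key : ∀ l, ⟪gradient F (φ w) - ∑ i, ∑ j, (g⁻¹ i j * a i) • b j, b l⟫ = 0 := by
      intro l
      rw [inner_sub_left, sum_inner]
      have hterm : ∀ i, ⟪∑ j, (g⁻¹ i j * a i) • b j, b l⟫ = a i * (g⁻¹ * g) i l := by
        intro i
        rw [sum_inner, Matrix.mul_apply, Finset.mul_sum]
        congr 1; funext j
        rw [real_inner_smul_left, ← hg j l]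
        ring
      simp only [hterm, hinv]
      simp [Matrix.one_apply, mul_ite, ha]
    -- extend to the span
    have : ∀ v ∈ S, ⟪gradient F (φ w) - ∑ i, ∑ j, (g⁻¹ i j * a i) • b j, v⟫ = 0 := by
      intro v hv
      refine Submodule.span_induction ?_ ?_ ?_ ?_ hv
      · rintro x ⟨l, rfl⟩; exact key l
      · simp
      · intro x y _ _ hx hy; rw [inner_add_right, hx, hy, add_zero]
      · intro c x _ hx; rw [real_inner_smul_right, hx, mul_zero]
    exact this v hv
end

section
/- Let H be a real Hilbert space, U ⊆ ℝᵏ open, φ : U → H continuously Fréchet differentiable with Dφ(w) injective for every w ∈ U, and F : H → ℝ Fréchet differentiable with gradient ∇F. For w ∈ U, let g̃(w) be the invertible matrix g̃(w)_{ij} = ⟨∂_iφ(w), ∂_jφ(w)⟩_H, let ∇_{g̃}F̃(w) = g̃(w)⁻¹ ∇_E F̃(w) be the natural gradient of F̃ = F ∘ φ (where ∇_E F̃ is the Euclidean gradient), and let P_w denote orthogonal projection of H onto span{∂₁φ(w),…,∂_kφ(w)}. Then a differentiable curve γ : I → U on an open interval I satisfies γ′(t) = ∇_{g̃}F̃(γ(t))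 for all t ∈ I if and only if the curve x(t) = φ(γ(t)) satisfies x′(t) = P_{γ(t)}(∇F(x(t))) for all t ∈ I. -/
open scoped RealInnerProductSpace

private lemma coord_sum {k : ℕ} (f : Fin k → ℝ) (j : Fin k) :
    (∑ i, f i • EuclideanSpace.single i 1 : EuclideanSpace ℝ (Fin k)) j = f j := by
  classical
  have h : (∑ i, f i • EuclideanSpace.single i 1 : EuclideanSpace ℝ (Fin k)) j
      = ∑ i, (f i • (EuclideanSpace.single i 1 : EuclideanSpace ℝ (Fin k))) j :=
    by rw [WithLp.ofLp_sum]; exact Finset.sum_apply j Finset.univ _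
  rw [h]
  simp [EuclideanSpace.single_apply]

/-- Natural-gradient flow lines on the parameter space correspond to projected-gradient flow
lines on the image: `γ` solves `γ′ = ∇_{g̃}(F ∘ φ)(γ)` iff `φ ∘ γ` solves
`x′ = P_{γ(t)}(∇F(x))`, where `P_w` is the orthogonal projection onto
`span {∂₁φ(w), …, ∂_kφ(w)}` and `g̃` is the pullback metric matrix. -/
theorem stmt_2 {H : Type*} [NormedAddCommGroup H] [InnerProductSpace ℝ H] [CompleteSpace H]
    {k : ℕ} {U : Set (EuclideanSpace ℝ (Fin k))} (hU : IsOpen U)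
    {φ : EuclideanSpace ℝ (Fin k) → H}
    {Dφ : EuclideanSpace ℝ (Fin k) → (EuclideanSpace ℝ (Fin k) →L[ℝ] H)}
    (hφ : ∀ w ∈ U, HasFDerivAt φ (Dφ w) w)
    (hφC1 : ContinuousOn Dφ U)
    (hinj : ∀ w ∈ U, Function.Injective (Dφ w))
    {F : H → ℝ} (hF : Differentiable ℝ F)
    (g : EuclideanSpace ℝ (Fin k) → Matrix (Fin k) (Fin k) ℝ)
    (hg : ∀ w ∈ U, ∀ i j,
      g w i j = ⟪Dφ w (EuclideanSpace.single i 1), Dφ w (EuclideanSpace.single j 1)⟫)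
    -- `P w` is the orthogonal projection of `H` onto `span {∂₁φ(w), …, ∂_kφ(w)}`
    (P : EuclideanSpace ℝ (Fin k) → H → H)
    (hPmem : ∀ w ∈ U, ∀ v : H,
      P w v ∈ Submodule.span ℝ (Set.range fun i => Dφ w (EuclideanSpace.single i 1)))
    (hPorth : ∀ w ∈ U, ∀ v : H,
      ∀ u ∈ Submodule.span ℝ (Set.range fun i => Dφ w (EuclideanSpace.single i 1)),
        ⟪v - P w v, u⟫ = 0)
    {a b : ℝ} (γ γ' : ℝ → EuclideanSpace ℝ (Fin k))
    (hγU : ∀ t ∈ Set.Ioo a b, γ t ∈ U)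
    (hγ : ∀ t ∈ Set.Ioo a b, HasDerivAt γ (γ' t) t) :
    (∀ t ∈ Set.Ioo a b,
        γ' t = ∑ i, ∑ j, ((g (γ t))⁻¹ i j *
          fderiv ℝ (F ∘ φ) (γ t) (EuclideanSpace.single i 1)) • EuclideanSpace.single j 1)
      ↔ (∀ t ∈ Set.Ioo a b,
          HasDerivAt (fun s => φ (γ s)) (P (γ t) (gradient F (φ (γ t)))) t) := by
  classical
  have key : ∀ t ∈ Set.Ioo a b,
      ((γ' t = ∑ i, ∑ j, ((g (γ t))⁻¹ i j *
          fderiv ℝ (F ∘ φ) (γ t) (EuclideanSpace.single i 1)) • EuclideanSpace.single j 1)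
        ↔ Dφ (γ t) (γ' t) = P (γ t) (gradient F (φ (γ t)))) := by
    intro t ht
    have hw : γ t ∈ U := hγU t ht
    set w := γ t with hwdef
    set v := γ' t with hvdef
    set u := gradient F (φ w) with hudef
    set bb : Fin k → H := fun i => Dφ w (EuclideanSpace.single i 1) with hbdef
    set d : Fin k → ℝ := fun i => fderiv ℝ (F ∘ φ) w (EuclideanSpace.single i 1) with hddef
    set G := g w with hGdef
    have hGij : ∀ i j, G i j = ⟪bb i, bb j⟫ := fun i j => hg w hw i j
    -- linear independence of the partial derivatives
    have hbLI : LinearIndependent ℝ bb := by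
      have h1 : LinearIndependent ℝ
          (((Dφ w : EuclideanSpace ℝ (Fin k) →L[ℝ] H) : EuclideanSpace ℝ (Fin k) →ₗ[ℝ] H) ∘
            (EuclideanSpace.basisFun (Fin k) ℝ).toBasis) :=
        ((EuclideanSpace.basisFun (Fin k) ℝ).toBasis.linearIndependent).map'
          _ (LinearMap.ker_eq_bot.mpr (hinj w hw))
      have h2 : bb = (((Dφ w : EuclideanSpace ℝ (Fin k) →L[ℝ] H) :
          EuclideanSpace ℝ (Fin k) →ₗ[ℝ] H) ∘
            (EuclideanSpace.basisFun (Fin k) ℝ).toBasis) := by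
        funext i
        simp [hbdef, EuclideanSpace.basisFun_apply]
      rw [h2]; exact h1
    -- derivative of F ∘ φ
    have hgrad : HasFDerivAt F ((InnerProductSpace.toDual ℝ H) u) (φ w) :=
      ((hF (φ w)).hasGradientAt).hasFDerivAt
    have hcomp : HasFDerivAt (F ∘ φ)
        (((InnerProductSpace.toDual ℝ H) u).comp (Dφ w)) w := hgrad.comp w (hφ w hw)
    have hd : ∀ i, d i = ⟪u, bb i⟫ := by
      intro i
      rw [hddef]
      simp only [hcomp.fderiv, ContinuousLinearMap.comp_apply,
        InnerProductSpace.toDual_apply_apply]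
      rfl
    -- inner products of the projection with the generators
    have hPi : ∀ j, ⟪P w u, bb j⟫ = d j := by
      intro j
      have hmem : bb j ∈ Submodule.span ℝ
          (Set.range fun i => Dφ w (EuclideanSpace.single i 1)) :=
        Submodule.subset_span ⟨j, rfl⟩
      have h3 := hPorth w hw u (bb j) hmem
      rw [inner_sub_left] at h3
      rw [hd j]
      linarith
    -- `Dφ w c` as a combination of the generators
    have hvsum : ∀ c : EuclideanSpace ℝ (Fin k), Dφ w c = ∑ i, c i • bb i := by
      intro c
      have hc : c = ∑ i, c i • EuclideanSpace.single i 1 :=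
        PiLp.ext fun j => (coord_sum (fun i => c i) j).symm
      conv_lhs => rw [hc]
      simp [hbdef]
    have hinner : ∀ (c : EuclideanSpace ℝ (Fin k)) (j : Fin k),
        ⟪Dφ w c, bb j⟫ = ∑ i, c i * G i j := by
      intro c j
      rw [hvsum c, sum_inner]
      exact Finset.sum_congr rfl fun i _ => by rw [real_inner_smul_left, hGij]
    have hinner' : ∀ (c : Fin k → ℝ) (j : Fin k),
        ⟪∑ i, c i • bb i, bb j⟫ = ∑ i, c i * G i j := by
      intro c j
      rw [sum_inner]
      exact Finset.sum_congr rfl fun i _ => by rw [real_inner_smul_left, hGij]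
    -- invertibility of the Gram matrix
    have hGdet : IsUnit G.det := by
      rw [isUnit_iff_ne_zero]
      intro h0
      obtain ⟨c, hc0, hcG⟩ := Matrix.exists_vecMul_eq_zero_iff.mpr h0
      have hz : (∑ i, c i • bb i) = 0 := by
        have hzz : ⟪∑ i, c i • bb i, ∑ i, c i • bb i⟫ = (0 : ℝ) := by
          rw [inner_sum]
          refine Finset.sum_eq_zero fun j _ => ?_
          rw [real_inner_smul_right, hinner' c j]
          have h4 : Matrix.vecMul c G j = 0 := by rw [hcG]; rfl
          simp only [Matrix.vecMul, dotProduct] at h4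
          rw [h4, mul_zero]
        exact inner_self_eq_zero.mp hzz
      exact hc0 (funext fun i => Fintype.linearIndependent_iff.mp hbLI c hz i)
    -- elements of the span are determined by inner products with the generators
    have hspan : ∀ y z : H,
        y ∈ Submodule.span ℝ (Set.range bb) → z ∈ Submodule.span ℝ (Set.range bb) →
        (∀ j, ⟪y, bb j⟫ = ⟪z, bb j⟫) → y = z := by
      intro y z hy hz hyz
      have hmem : y - z ∈ Submodule.span ℝ (Set.range bb) := Submodule.sub_mem _ hy hz
      obtain ⟨c, hc⟩ := (Submodule.mem_span_range_iff_exists_fun ℝ).mp hmem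
      have h5 : ⟪y - z, y - z⟫ = (0 : ℝ) := by
        have h5' : ⟪y - z, ∑ i, c i • bb i⟫ = (0 : ℝ) := by
          rw [inner_sum]
          refine Finset.sum_eq_zero fun j _ => ?_
          rw [real_inner_smul_right, inner_sub_left, hyz j, sub_self, mul_zero]
        rw [hc] at h5'
        exact h5'
      exact sub_eq_zero.mp (inner_self_eq_zero.mp h5)
    have hDmem : Dφ w v ∈ Submodule.span ℝ (Set.range bb) := by
      rw [hvsum v]
      exact Submodule.sum_mem _ fun i _ =>
        Submodule.smul_mem _ _ (Submodule.subset_span ⟨i, rfl⟩)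
    have hPm : P w u ∈ Submodule.span ℝ (Set.range bb) := hPmem w hw u
    -- the key coordinate computation
    change (v = ∑ i, ∑ j, (G⁻¹ i j * d i) • EuclideanSpace.single j 1) ↔ Dφ w v = P w u
    have hsumcoord : ∀ l : Fin k,
        (∑ i, ∑ j, (G⁻¹ i j * d i) • EuclideanSpace.single j 1 :
          EuclideanSpace ℝ (Fin k)) l = Matrix.vecMul d G⁻¹ l := by
      intro l
      have h6 : (∑ i, ∑ j, (G⁻¹ i j * d i) • EuclideanSpace.single j 1 :
          EuclideanSpace ℝ (Fin k)) l
          = ∑ i, (∑ j, (G⁻¹ i j * d i) • EuclideanSpace.single j 1 :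
              EuclideanSpace ℝ (Fin k)) l :=
        by rw [WithLp.ofLp_sum]; exact Finset.sum_apply l Finset.univ _
      rw [h6]
      simp only [Matrix.vecMul, dotProduct]
      refine Finset.sum_congr rfl fun i _ => ?_
      rw [coord_sum (fun j => G⁻¹ i j * d i) l, mul_comm]
    constructor
    · intro hveq
      -- coordinates of v
      have hv' : (fun i => v i) = Matrix.vecMul d G⁻¹ := by
        funext l
        rw [hveq]
        exact hsumcoord l
      have hvG : Matrix.vecMul (fun i => v i) G = d := by
        rw [hv', Matrix.vecMul_vecMul, Matrix.nonsing_inv_mul G hGdet, Matrix.vecMul_one]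
      refine hspan _ _ hDmem hPm fun j => ?_
      rw [hinner v j, hPi j]
      have h7 := congrFun hvG j
      simp only [Matrix.vecMul, dotProduct] at h7
      exact h7
    · intro heq
      have hvG : Matrix.vecMul (fun i => v i) G = d := by
        funext j
        have h8 := hinner v j
        rw [heq, hPi j] at h8
        simp only [Matrix.vecMul, dotProduct]
        exact h8.symm ▸ rfl
      have hv' : (fun i => v i) = Matrix.vecMul d G⁻¹ := by
        rw [← hvG, Matrix.vecMul_vecMul, Matrix.mul_nonsing_inv G hGdet, Matrix.vecMul_one]
      ext l
      rw [hsumcoord l]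
      exact congrFun hv' l
  constructor
  · intro h t ht
    have hcomp : HasDerivAt (fun s => φ (γ s)) (Dφ (γ t) (γ' t)) t :=
      (hφ _ (hγU t ht)).comp_hasDerivAt t (hγ t ht)
    rw [← (key t ht).mp (h t ht)]
    exact hcomp
  · intro h t ht
    have hcomp : HasDerivAt (fun s => φ (γ s)) (Dφ (γ t) (γ' t)) t :=
      (hφ _ (hγU t ht)).comp_hasDerivAt t (hγ t ht)
    exact (key t ht).mpr (hcomp.unique (h t ht))
end

section
/- Let X be a set, n, k ≥ 1 integers, and b₁,…,b_k : X → ℝⁿ linearly independent functions. Define the matrix-valued kernel K(x, x′) = Σ_{ℓ=1}^k b_ℓ(x) b_ℓ(x′)ᵀ (an n×n matrix for each pair of points, acting on v ∈ ℝⁿ by K(x,x′)v = Σ_ℓ (b_ℓ(x′)·v) b_ℓ(x)). Suppose S ⊆ X is a finite set and C₁,…,C_k : S → ℝⁿ are such that b_i(y) = Σ_{x∈S} K(y, x) C_i(x) for all y ∈ X and all i. Then for all i, j ∈ {1,…,k}: Σ_{x∈S} Σ_{x′∈S} C_i(x)ᵀ K(x, x′) C_j(x′) = δ_{ij}. (This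 says that any basis of a finite-dimensional space of ℝⁿ-valued functions is orthonormal for the RKHS inner product of the kernel it generates.) -/
open scoped RealInnerProductSpace

/-- Automatic orthonormality of a basis for its induced kernel: if `b₁, …, b_k : X → ℝⁿ` are
linearly independent, `K(x,x′) = ∑ ℓ, b_ℓ(x) b_ℓ(x′)ᵀ`, and the coefficient functions `Cᵢ`
represent `bᵢ` as `bᵢ(y) = ∑_{x ∈ S} K(y,x) Cᵢ(x)`, then the RKHS inner products
`∑_{x,x′∈S} Cᵢ(x)ᵀ K(x,x′) C_j(x′)` equal the Kronecker delta `δᵢⱼ`. -/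
theorem stmt_6 {X : Type*} (n k : ℕ) (hn : 1 ≤ n) (hk : 1 ≤ k)
    (b : Fin k → X → EuclideanSpace ℝ (Fin n))
    (hb : LinearIndependent ℝ b)
    (S : Finset X) (C : Fin k → X → EuclideanSpace ℝ (Fin n))
    (hrep : ∀ i, ∀ y : X, b i y = ∑ x ∈ S, ∑ ℓ, ⟪b ℓ x, C i x⟫ • b ℓ y)
    (i j : Fin k) :
    ∑ x ∈ S, ∑ x' ∈ S, ∑ ℓ, ⟪C i x, b ℓ x⟫ * ⟪b ℓ x', C j x'⟫
      = if i = j then (1 : ℝ) else 0 := by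
  classical
  set a : Fin k → Fin k → ℝ := fun i ℓ => ∑ x ∈ S, ⟪b ℓ x, C i x⟫ with ha
  have hrep' : ∀ m, (∑ ℓ, a m ℓ • b ℓ) = b m := by
    intro m
    funext y
    have := hrep m y
    rw [Finset.sum_comm] at this
    simp only [ha, Finset.sum_apply, Pi.smul_apply, Finset.sum_smul]
    exact this.symm
  have hdelta : ∀ m ℓ, a m ℓ = if m = ℓ then 1 else 0 := by
    intro m ℓ
    have h0 : (∑ ℓ, (a m ℓ - if m = ℓ then 1 else 0) • b ℓ) = 0 := by
      simp only [sub_smul, Finset.sum_sub_distrib, hrep' m, ite_smul, one_smul, zero_smul,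
        Finset.sum_ite_eq, Finset.mem_univ, if_true]
      simp
    have := (Fintype.linearIndependent_iff.mp hb) _ h0 ℓ
    linarith [this]
  have key : (∑ x ∈ S, ∑ x' ∈ S, ∑ ℓ, ⟪C i x, b ℓ x⟫ * ⟪b ℓ x', C j x'⟫)
      = ∑ ℓ, a i ℓ * a j ℓ := by
    calc (∑ x ∈ S, ∑ x' ∈ S, ∑ ℓ, ⟪C i x, b ℓ x⟫ * ⟪b ℓ x', C j x'⟫)
        = ∑ x ∈ S, ∑ ℓ, ∑ x' ∈ S, ⟪C i x, b ℓ x⟫ * ⟪b ℓ x', C j x'⟫ :=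
          Finset.sum_congr rfl fun x _ => Finset.sum_comm
      _ = ∑ ℓ, ∑ x ∈ S, ∑ x' ∈ S, ⟪C i x, b ℓ x⟫ * ⟪b ℓ x', C j x'⟫ := Finset.sum_comm
      _ = ∑ ℓ, a i ℓ * a j ℓ := by
          refine Finset.sum_congr rfl fun ℓ _ => ?_
          simp only [ha]
          rw [Finset.sum_mul_sum]
          refine Finset.sum_congr rfl fun x _ => Finset.sum_congr rfl fun x' _ => ?_
          rw [real_inner_comm (b ℓ x) (C i x)]
  rw [key]
  simp only [hdelta]
  by_cases hij : i = j
  · subst hij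
    simp
  · simp [hij]
end

section
/- Let n ≥ 2 be an integer, s > n+1 a real number, and x ∈ ℝⁿ with x ≠ 0. Then ∫_{ℝⁿ} cos(x·ξ) (1+‖ξ‖²)^{−s/2} dξ = (∫_{−∞}^{∞} cos(‖x‖ t) (1+t²)^{−(s−n+1)/2} dt) · (∫_0^∞ (1+r²)^{−s/2} r^{n−2} dr) · (2π^{(n−1)/2} / Γ((n−1)/2)). That is, the n-dimensional Fourier integral of (1+‖ξ‖²)^{−s/2} factors into a one-dimensional Fourier integral, a radial integral, and the volume of the unit sphere S^{n−2}. -/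
set_option maxHeartbeats 1000000

open MeasureTheory Set Real

open scoped RealInnerProductSpace

private lemma aux_radial9 (m : ℕ) (s c : ℝ) (hc : 0 < c) :
    ∫ ρ in Ioi (0:ℝ), ρ ^ m * (c + ρ ^ 2) ^ (-(s/2))
      = c ^ (((m:ℝ) + 1 - s)/2) * ∫ r in Ioi (0:ℝ), r ^ m * (1 + r ^ 2) ^ (-(s/2)) := by
  have hb : 0 < Real.sqrt c := Real.sqrt_pos.2 hc
  have hb2 : Real.sqrt c ^ 2 = c := Real.sq_sqrt hc.le
  have key := integral_comp_mul_left_Ioi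
    (fun u => u ^ m * (c + u ^ 2) ^ (-(s/2))) 0 hb
  rw [mul_zero] at key
  have lhs : ∀ ρ : ℝ, ρ ∈ Ioi (0:ℝ) →
      (Real.sqrt c * ρ) ^ m * (c + (Real.sqrt c * ρ) ^ 2) ^ (-(s/2))
        = Real.sqrt c ^ m * c ^ (-(s/2)) * (ρ ^ m * (1 + ρ ^ 2) ^ (-(s/2))) := by
    intro ρ _
    have h1 : c + (Real.sqrt c * ρ) ^ 2 = c * (1 + ρ ^ 2) := by
      rw [mul_pow, hb2]; ring
    rw [h1, Real.mul_rpow hc.le (by positivity), mul_pow]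
    ring
  rw [setIntegral_congr_fun measurableSet_Ioi lhs, integral_const_mul,
    smul_eq_mul] at key
  beta_reduce at key
  have hsc : Real.sqrt c ^ m * c ^ (-(s/2)) * Real.sqrt c
      = c ^ (((m:ℝ) + 1 - s)/2) := by
    rw [Real.sqrt_eq_rpow, ← Real.rpow_natCast (c ^ ((1:ℝ)/2)) m,
      ← Real.rpow_mul hc.le, ← Real.rpow_add hc, ← Real.rpow_add hc]
    ring_nf
  calc ∫ ρ in Ioi (0:ℝ), ρ ^ m * (c + ρ ^ 2) ^ (-(s/2))
      = Real.sqrt c * (Real.sqrt c ^ m * c ^ (-(s/2))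
          * ∫ r in Ioi (0:ℝ), r ^ m * (1 + r ^ 2) ^ (-(s/2))) := by
        rw [key, ← mul_assoc, mul_inv_cancel₀ hb.ne', one_mul]
    _ = _ := by rw [← hsc]; ring

private lemma aux_const9 (m : ℕ) :
    ((m:ℝ)+1) * (volume (Metric.ball (0:EuclideanSpace ℝ (Fin (m+1))) 1)).toReal
      = 2 * π ^ (((m:ℝ)+1)/2) / Real.Gamma (((m:ℝ)+1)/2) := by
  have hg : 0 < Real.Gamma (((m:ℝ)+1)/2) := Real.Gamma_pos_of_pos (by positivity)
  rw [EuclideanSpace.volume_ball, Fintype.card_fin, ENNReal.ofReal_one, one_pow, one_mul,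
    ENNReal.toReal_ofReal (by positivity)]
  have h1 : Real.sqrt π ^ (m+1) = π ^ (((m:ℝ)+1)/2) := by
    rw [Real.sqrt_eq_rpow, ← Real.rpow_natCast (π ^ ((1:ℝ)/2)) (m+1),
      ← Real.rpow_mul pi_pos.le]
    push_cast
    ring_nf
  have h2 : ((m+1 : ℕ) : ℝ)/2 + 1 = (((m:ℝ)+1)/2) + 1 := by push_cast; ring
  rw [h1, h2, Real.Gamma_add_one (by positivity)]
  field_simp

private lemma aux_inner9 (m : ℕ) (s c : ℝ) (hc : 0 < c) :
    ∫ y : EuclideanSpace ℝ (Fin (m+1)), (c + ‖y‖ ^ 2) ^ (-(s/2))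
      = (((m:ℝ)+1) * (volume (Metric.ball (0:EuclideanSpace ℝ (Fin (m+1))) 1)).toReal)
        * (c ^ (((m:ℝ) + 1 - s)/2) * ∫ r in Ioi (0:ℝ), r ^ m * (1 + r ^ 2) ^ (-(s/2))) := by
  have h := integral_fun_norm_addHaar (volume : Measure (EuclideanSpace ℝ (Fin (m+1))))
    (fun ρ : ℝ => (c + ρ ^ 2) ^ (-(s/2)))
  rw [finrank_euclideanSpace, Fintype.card_fin] at h
  rw [h]
  have : ∫ y in Ioi (0:ℝ), y ^ (m + 1 - 1) • (c + y ^ 2) ^ (-(s/2))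
      = ∫ ρ in Ioi (0:ℝ), ρ ^ m * (c + ρ ^ 2) ^ (-(s/2)) := by
    simp [smul_eq_mul]
  rw [this, aux_radial9 m s c hc]
  simp only [nsmul_eq_mul, smul_eq_mul]
  push_cast
  rw [measureReal_def]
  ring

private lemma aux_int9 (m : ℕ) {s : ℝ} (hs : ((m:ℝ)+2) < s) (a : ℝ) :
    Integrable (fun p : ℝ × EuclideanSpace ℝ (Fin (m+1)) =>
      Real.cos (a * p.1) * (1 + p.1 ^ 2 + ‖p.2‖ ^ 2) ^ (-(s/2)))
      ((volume : Measure ℝ).prod (volume : Measure (EuclideanSpace ℝ (Fin (m+1))))) := by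
  have hfr : (Module.finrank ℝ (ℝ × EuclideanSpace ℝ (Fin (m+1))) : ℝ) < s := by
    rw [Module.finrank_prod, finrank_euclideanSpace, Fintype.card_fin, Module.finrank_self]
    push_cast
    linarith
  have hbound : Integrable (fun p : ℝ × EuclideanSpace ℝ (Fin (m+1)) =>
      ((1:ℝ) + ‖p‖ ^ 2) ^ (-s/2)) ((volume : Measure ℝ).prod volume) :=
    integrable_rpow_neg_one_add_norm_sq hfr
  have hcont : Continuous (fun p : ℝ × EuclideanSpace ℝ (Fin (m+1)) =>
      Real.cos (a * p.1) * (1 + p.1 ^ 2 + ‖p.2‖ ^ 2) ^ (-(s/2))) := by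
    apply Continuous.mul
    · exact Real.continuous_cos.comp (continuous_const.mul continuous_fst)
    · apply Continuous.rpow_const
      · fun_prop
      · intro p
        left
        positivity
  refine hbound.mono' hcont.aestronglyMeasurable (Filter.Eventually.of_forall fun p => ?_)
  have h1 : ‖p‖ ^ 2 ≤ p.1 ^ 2 + ‖p.2‖ ^ 2 := by
    rw [Prod.norm_def]
    have e1 : ‖p.1‖ ^ 2 = p.1 ^ 2 := by rw [Real.norm_eq_abs, sq_abs]
    rcases le_total ‖p.1‖ ‖p.2‖ with h | h
    · rw [max_eq_right h]; nlinarith [sq_nonneg p.1]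
    · rw [max_eq_left h, e1]; nlinarith [norm_nonneg p.2]
  have h2 : (1 + p.1 ^ 2 + ‖p.2‖ ^ 2) ^ (-(s/2)) ≤ (1 + ‖p‖ ^ 2) ^ (-s/2) := by
    rw [neg_div]
    refine Real.rpow_le_rpow_of_nonpos (by positivity) (by linarith) ?_
    have hm : (0:ℝ) ≤ (m:ℝ) := Nat.cast_nonneg m
    nlinarith
  rw [norm_mul, Real.norm_eq_abs, Real.norm_eq_abs,
    abs_of_pos (Real.rpow_pos_of_pos (by positivity) _)]
  calc |Real.cos (a * p.1)| * (1 + p.1 ^ 2 + ‖p.2‖ ^ 2) ^ (-(s/2))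
      ≤ 1 * (1 + p.1 ^ 2 + ‖p.2‖ ^ 2) ^ (-(s/2)) := by
        have := Real.abs_cos_le_one (a * p.1)
        have hpos : (0:ℝ) ≤ (1 + p.1 ^ 2 + ‖p.2‖ ^ 2) ^ (-(s/2)) :=
          (Real.rpow_pos_of_pos (by positivity) _).le
        nlinarith
    _ ≤ (1 + ‖p‖ ^ 2) ^ (-s/2) := by rw [one_mul]; exact h2

private lemma aux_split9 (m : ℕ) (s a : ℝ) :
    (∫ η : EuclideanSpace ℝ (Fin (m+2)), Real.cos (a * η 0) * (1+‖η‖^2)^(-(s/2)))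
      = ∫ p : ℝ × EuclideanSpace ℝ (Fin (m+1)),
          Real.cos (a * p.1) * (1 + p.1^2 + ‖p.2‖^2)^(-(s/2))
          ∂((volume : Measure ℝ).prod volume) := by
  have step2 : (∫ η : EuclideanSpace ℝ (Fin (m+2)), Real.cos (a * η 0) * (1+‖η‖^2)^(-(s/2)))
      = ∫ y : Fin (m+2) → ℝ, Real.cos (a * y 0) * (1 + ∑ i, y i ^ 2)^(-(s/2)) := by
    rw [← (EuclideanSpace.volume_preserving_symm_measurableEquiv_toLp (Fin (m+2))).symm _ |>.integral_comp'
      (fun η => Real.cos (a * η 0) * (1+‖η‖^2)^(-(s/2)))]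
    refine integral_congr_ae (Filter.Eventually.of_forall fun y => ?_)
    beta_reduce
    have h1 : ((MeasurableEquiv.toLp 2 (Fin (m+2) → ℝ)).symm.symm y : EuclideanSpace ℝ (Fin (m+2)))
        = WithLp.toLp 2 y := rfl
    have h2 : ‖((MeasurableEquiv.toLp 2 (Fin (m+2) → ℝ)).symm.symm y)‖ ^ 2 = ∑ i, y i ^ 2 := by
      rw [EuclideanSpace.norm_eq, Real.sq_sqrt (by positivity)]
      simp [h1, sq_abs]
    rw [h2]
    congr 2
  have step3 : (∫ y : Fin (m+2) → ℝ, Real.cos (a * y 0) * (1 + ∑ i, y i ^ 2)^(-(s/2)))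
      = ∫ p : ℝ × (Fin (m+1) → ℝ), Real.cos (a * p.1) * (1 + (p.1^2 + ∑ j, p.2 j ^ 2))^(-(s/2))
        ∂((volume : Measure ℝ).prod volume) := by
    rw [← (volume_preserving_piFinSuccAbove (fun _ : Fin (m+2) => ℝ) 0).symm _ |>.integral_comp'
      (fun y => Real.cos (a * y 0) * (1 + ∑ i, y i ^ 2)^(-(s/2)))]
    refine integral_congr_ae (Filter.Eventually.of_forall fun p => ?_)
    beta_reduce
    have h0 : ((MeasurableEquiv.piFinSuccAbove (fun _ : Fin (m+2) => ℝ) 0).symm p) 0 = p.1 := by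
      simp [MeasurableEquiv.piFinSuccAbove]
    have hsum : ∑ i, ((MeasurableEquiv.piFinSuccAbove (fun _ : Fin (m+2) => ℝ) 0).symm p) i ^ 2
        = p.1 ^ 2 + ∑ j, p.2 j ^ 2 := by
      rw [Fin.sum_univ_succAbove _ 0]
      simp [MeasurableEquiv.piFinSuccAbove]
    rw [h0, hsum]
  have step4 : (∫ p : ℝ × (Fin (m+1) → ℝ),
        Real.cos (a * p.1) * (1 + (p.1^2 + ∑ j, p.2 j ^ 2))^(-(s/2))
        ∂((volume : Measure ℝ).prod volume))
      = ∫ p : ℝ × EuclideanSpace ℝ (Fin (m+1)),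
          Real.cos (a * p.1) * (1 + p.1^2 + ‖p.2‖^2)^(-(s/2))
          ∂((volume : Measure ℝ).prod volume) := by
    have hmp : MeasurePreserving
        (Prod.map (id : ℝ → ℝ) (MeasurableEquiv.toLp 2 (Fin (m+1) → ℝ)).symm)
        ((volume : Measure ℝ).prod volume) ((volume : Measure ℝ).prod volume) :=
      (MeasurePreserving.id volume).prod
        (EuclideanSpace.volume_preserving_symm_measurableEquiv_toLp (Fin (m+1)))
    rw [← hmp.integral_comp ((MeasurableEquiv.refl ℝ).prodCongr
        (MeasurableEquiv.toLp 2 (Fin (m+1) → ℝ)).symm).measurableEmbedding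
      (fun p : ℝ × (Fin (m+1) → ℝ) =>
        Real.cos (a * p.1) * (1 + (p.1^2 + ∑ j, p.2 j ^ 2))^(-(s/2)))]
    refine integral_congr_ae (Filter.Eventually.of_forall fun p => ?_)
    beta_reduce
    have h2 : ∑ j, ((MeasurableEquiv.toLp 2 (Fin (m+1) → ℝ)).symm p.2) j ^ 2 = ‖p.2‖ ^ 2 := by
      rw [EuclideanSpace.norm_eq, Real.sq_sqrt (by positivity)]
      simp [sq_abs]
    simp only [Prod.map_fst, Prod.map_snd, id_eq, h2]
    ring_nf
  rw [step2, step3, step4]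

/-- Factorization of the `n`-dimensional Fourier integral of `(1+‖ξ‖²)^{-s/2}` into a
one-dimensional Fourier integral, a radial integral, and the volume
`2π^{(n-1)/2}/Γ((n-1)/2)` of the unit sphere `S^{n-2}`. -/
theorem stmt_9 (n : ℕ) (hn : 2 ≤ n) (s : ℝ) (hs : (n : ℝ) + 1 < s)
    (x : EuclideanSpace ℝ (Fin n)) (hx : x ≠ 0) :
    ∫ ξ : EuclideanSpace ℝ (Fin n), Real.cos ⟪x, ξ⟫ * (1 + ‖ξ‖ ^ 2) ^ (-(s / 2))
      = (∫ t : ℝ, Real.cos (‖x‖ * t) * (1 + t ^ 2) ^ (-((s - n + 1) / 2)))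
        * (∫ r in Set.Ioi (0 : ℝ), (1 + r ^ 2) ^ (-(s / 2)) * r ^ (n - 2))
        * (2 * Real.pi ^ (((n : ℝ) - 1) / 2) / Real.Gamma (((n : ℝ) - 1) / 2)) := by
  obtain ⟨m, rfl⟩ : ∃ m, n = m + 2 := ⟨n - 2, by omega⟩
  have hs' : ((m:ℝ) + 2) < s := by push_cast at hs ⊢; linarith
  -- rotate so that x points along the first coordinate
  have hx' : ‖x‖ ≠ 0 := norm_ne_zero_iff.2 hx
  set v : EuclideanSpace ℝ (Fin (m+2)) := ‖x‖⁻¹ • x with hv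
  have hv1 : ‖v‖ = 1 := norm_smul_inv_norm hx
  have hon : Orthonormal ℝ (({0} : Set (Fin (m+2))).restrict (fun _ => v)) := by
    constructor
    · intro i; exact hv1
    · intro i j hij
      exact absurd (Subsingleton.elim i j) hij
  obtain ⟨b, hb⟩ := hon.exists_orthonormalBasis_extension_of_card_eq
    (by simp [finrank_euclideanSpace])
  have hb0 : b 0 = v := hb 0 rfl
  have e1 : ∀ η : EuclideanSpace ℝ (Fin (m+2)), ⟪x, b.repr.symm η⟫ = ‖x‖ * η 0 := by
    intro η
    have hxv : x = ‖x‖ • b 0 := by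
      rw [hb0, hv, smul_smul, mul_inv_cancel₀ hx', one_smul]
    calc ⟪x, b.repr.symm η⟫ = ⟪b.repr x, b.repr (b.repr.symm η)⟫ :=
          (b.repr.inner_map_map _ _).symm
      _ = ⟪b.repr x, η⟫ := by rw [LinearIsometryEquiv.apply_symm_apply]
      _ = ‖x‖ * η 0 := by
          conv_lhs => rw [hxv, LinearIsometryEquiv.map_smul, b.repr_self]
          rw [real_inner_smul_left, EuclideanSpace.inner_single_left]
          simp
  have step1 : (∫ ξ : EuclideanSpace ℝ (Fin (m+2)), Real.cos ⟪x, ξ⟫ * (1+‖ξ‖^2)^(-(s/2)))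
      = ∫ η : EuclideanSpace ℝ (Fin (m+2)), Real.cos (‖x‖ * η 0) * (1+‖η‖^2)^(-(s/2)) := by
    rw [← (b.measurePreserving_repr_symm).integral_comp
      b.repr.symm.toHomeomorph.measurableEmbedding
      (fun ξ => Real.cos ⟪x, ξ⟫ * (1+‖ξ‖^2)^(-(s/2)))]
    refine integral_congr_ae (Filter.Eventually.of_forall fun η => ?_)
    beta_reduce
    rw [e1 η, LinearIsometryEquiv.norm_map]
  rw [step1, aux_split9 m s ‖x‖]
  -- Fubini
  rw [integral_prod _ (aux_int9 m hs' ‖x‖)]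
  -- inner integral
  have hinner : ∀ t : ℝ,
      (∫ z : EuclideanSpace ℝ (Fin (m+1)),
          Real.cos (‖x‖ * t) * (1 + t^2 + ‖z‖^2)^(-(s/2)))
        = (Real.cos (‖x‖ * t) * (1 + t^2)^(-((s - (m+2 : ℕ) + 1) / 2)))
          * ((((m:ℝ)+1) * (volume (Metric.ball (0:EuclideanSpace ℝ (Fin (m+1))) 1)).toReal)
            * ∫ r in Ioi (0:ℝ), r ^ m * (1 + r ^ 2) ^ (-(s/2))) := by
    intro t
    have hc : (0:ℝ) < 1 + t^2 := by positivity
    rw [integral_const_mul]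
    rw [aux_inner9 m s (1 + t^2) hc]
    have hexp : ((m:ℝ) + 1 - s)/2 = -((s - (m+2 : ℕ) + 1) / 2) := by push_cast; ring
    rw [hexp]
    ring
  simp_rw [hinner]
  rw [integral_mul_const]
  have hR : (∫ r in Ioi (0:ℝ), (1 + r ^ 2) ^ (-(s/2)) * r ^ (m + 2 - 2))
      = ∫ r in Ioi (0:ℝ), r ^ m * (1 + r ^ 2) ^ (-(s/2)) := by
    have hmm : m + 2 - 2 = m := by omega
    rw [hmm]
    exact setIntegral_congr_fun measurableSet_Ioi fun r _ => mul_comm _ _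
  have hC : (2 * Real.pi ^ ((((m+2 : ℕ) : ℝ) - 1) / 2) / Real.Gamma ((((m+2 : ℕ) : ℝ) - 1) / 2))
      = ((m:ℝ)+1) * (volume (Metric.ball (0:EuclideanSpace ℝ (Fin (m+1))) 1)).toReal := by
    rw [aux_const9 m]
    norm_num
    push_cast
    ring_nf
  rw [hR, hC]
  ring
end

section
/- Let f : ℝⁿ → ℝ be differentiable with L-Lipschitz Euclidean gradient (‖∇f(x) − ∇f(y)‖ ≤ L‖x−y‖ for all x, y), and let g assign to each x ∈ ℝⁿ a symmetric positive definite matrix g(x) with ‖u‖² ≤ C · uᵀ g(x) u for all x, u (𝔼-compatibility with constant C > 0). Then the natural gradient descent update x′ = x − (1/(CL)) g(x)⁻¹ ∇f(x) satisfies f(x) − f(x′) ≥ (1/(2CL)) ∇f(x)ᵀ g(x)⁻¹ ∇f(x). -/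
open Matrix
open scoped RealInnerProductSpace

-- descent lemma
lemma descent_lemma {E : Type*} [NormedAddCommGroup E] [InnerProductSpace ℝ E] [CompleteSpace E]
    (f : E → ℝ) (hf : Differentiable ℝ f) (L : ℝ) (hL : 0 ≤ L)
    (hLip : ∀ x y : E, ‖gradient f x - gradient f y‖ ≤ L * ‖x - y‖)
    (x v : E) :
    f (x + v) ≤ f x + ⟪gradient f x, v⟫ + L / 2 * ‖v‖ ^ 2 := by
  set ψ : ℝ → ℝ := fun t => f (x + t • v) - t * ⟪gradient f x, v⟫ - L * t ^ 2 / 2 * ‖v‖ ^ 2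
    with hψ
  have hcd : ∀ t : ℝ, HasDerivAt (fun s : ℝ => x + s • v) v t := by
    intro t
    simpa using ((hasDerivAt_id t).smul_const v).const_add x
  have hfd : ∀ t : ℝ, HasDerivAt (fun s : ℝ => f (x + s • v))
      ⟪gradient f (x + t • v), v⟫ t := by
    intro t
    have h1 := (hf (x + t • v)).hasGradientAt.hasFDerivAt
    have := h1.comp_hasDerivAt t (hcd t)
    simpa [InnerProductSpace.toDual_apply_apply, Function.comp_def] using this
  have hψd : ∀ t : ℝ, HasDerivAt ψ
      (⟪gradient f (x + t • v), v⟫ - ⟪gradient f x, v⟫ - L * t * ‖v‖ ^ 2) t := by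
    intro t
    have h2 : HasDerivAt (fun t : ℝ => t * ⟪gradient f x, v⟫) ⟪gradient f x, v⟫ t := by
      simpa using (hasDerivAt_id t).mul_const _
    have h3 : HasDerivAt (fun t : ℝ => L * t ^ 2 / 2 * ‖v‖ ^ 2) (L * t * ‖v‖ ^ 2) t := by
      have := ((hasDerivAt_pow 2 t).const_mul L).div_const 2
      have := this.mul_const (‖v‖ ^ 2)
      convert this using 1
      · rfl
      · rfl
      ring
    exact ((hfd t).sub h2).sub h3
  have hanti : AntitoneOn ψ (Set.Icc 0 1) := by
    apply antitoneOn_of_deriv_nonpos (convex_Icc 0 1)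
    · exact Continuous.continuousOn (by
        have : Continuous ψ := by
          apply Continuous.sub
          apply Continuous.sub
          · exact hf.continuous.comp (by continuity)
          · continuity
          · continuity
        exact this)
    · intro t ht
      exact ((hψd t).differentiableAt).differentiableWithinAt
    · intro t ht
      rw [interior_Icc] at ht
      rw [((hψd t).deriv)]
      have hcs : ⟪gradient f (x + t • v) - gradient f x, v⟫ ≤ L * t * ‖v‖ ^ 2 := by
        calc ⟪gradient f (x + t • v) - gradient f x, v⟫
            ≤ ‖gradient f (x + t • v) - gradient f x‖ * ‖v‖ := real_inner_le_norm _ _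
          _ ≤ (L * ‖(x + t • v) - x‖) * ‖v‖ := by
              exact mul_le_mul_of_nonneg_right (hLip _ _) (norm_nonneg v)
          _ = L * t * ‖v‖ ^ 2 := by
              rw [show (x + t • v) - x = t • v by abel, norm_smul]
              simp [abs_of_pos ht.1]
              ring
      have := inner_sub_left (𝕜 := ℝ) (gradient f (x + t • v)) (gradient f x) v
      linarith [hcs, this.symm.le, this.le]
  have h01 := hanti (Set.mem_Icc.mpr ⟨le_refl 0, zero_le_one⟩)
      (Set.mem_Icc.mpr ⟨zero_le_one, le_refl 1⟩) zero_le_one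
  simp only [hψ, zero_smul, add_zero, one_smul, zero_pow, one_pow, mul_zero, mul_one,
    zero_mul, sub_zero, ne_eq, OfNat.ofNat_ne_zero, not_false_eq_true] at h01
  linarith [h01]

/-- Natural gradient descent progress guarantee: under `L`-Lipschitzness of the Euclidean
gradient and 𝔼-compatibility of the metric `g` with constant `C`, the update
`x′ = x - (1/(CL)) g(x)⁻¹ ∇f(x)` satisfies
`f(x) - f(x′) ≥ (1/(2CL)) ∇f(x)ᵀ g(x)⁻¹ ∇f(x)`. -/
theorem stmt_14 (n : ℕ) (f : EuclideanSpace ℝ (Fin n) → ℝ) (hf : Differentiable ℝ f)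
    (L : ℝ) (hL : 0 < L)
    (hLip : ∀ x y : EuclideanSpace ℝ (Fin n),
      ‖gradient f x - gradient f y‖ ≤ L * ‖x - y‖)
    (g : EuclideanSpace ℝ (Fin n) → Matrix (Fin n) (Fin n) ℝ)
    (hgsym : ∀ x, (g x).IsSymm) (hgpos : ∀ x, (g x).PosDef)
    (C : ℝ) (hC : 0 < C)
    (hcompat : ∀ (x u : EuclideanSpace ℝ (Fin n)), ‖u‖ ^ 2 ≤ C * (u ⬝ᵥ (g x).mulVec u))
    (x : EuclideanSpace ℝ (Fin n)) :
    let gr : EuclideanSpace ℝ (Fin n) := gradient f x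
    f x - f (x - (1 / (C * L)) • (show EuclideanSpace ℝ (Fin n) from WithLp.toLp 2 ((g x)⁻¹.mulVec gr)))
      ≥ (1 / (2 * C * L)) * (gr ⬝ᵥ (g x)⁻¹.mulVec gr) := by
  intro gr
  set d : EuclideanSpace ℝ (Fin n) := WithLp.toLp 2 ((g x)⁻¹.mulVec gr) with hd
  set η : ℝ := 1 / (C * L) with hη
  set S : ℝ := gr ⬝ᵥ (g x)⁻¹.mulVec gr with hS
  have hdet : IsUnit (g x).det := isUnit_iff_ne_zero.mpr (hgpos x).det_pos.ne'
  have hgd : (g x).mulVec ((g x)⁻¹.mulVec gr) = gr := by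
    rw [Matrix.mulVec_mulVec, Matrix.mul_nonsing_inv _ hdet, Matrix.one_mulVec]
  have hinner : ⟪gr, d⟫ = S := by
    simp [hS, hd, PiLp.inner_apply, RCLike.inner_apply, dotProduct, mul_comm]
  have hDnorm : ‖d‖ ^ 2 ≤ C * S := by
    have := hcompat x d
    rwa [hd, hgd, dotProduct_comm, ← hS] at this
  have hdesc := descent_lemma f hf L hL.le hLip x ((-η) • d)
  have hxeq : x + (-η) • d = x - η • d := by
    rw [neg_smul, ← sub_eq_add_neg]
  rw [hxeq] at hdesc
  have hinn2 : ⟪gradient f x, (-η) • d⟫ = -η * S := by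
    rw [real_inner_smul_right]
    rw [show gradient f x = gr from rfl, hinner]
  rw [hinn2] at hdesc
  have hnrm : ‖(-η) • d‖ ^ 2 = η ^ 2 * ‖d‖ ^ 2 := by
    rw [norm_smul]; simp [mul_pow]
  rw [hnrm] at hdesc
  have hCL : 0 < C * L := mul_pos hC hL
  have hηpos : 0 < η := by positivity
  have hkey : L / 2 * (η ^ 2 * ‖d‖ ^ 2) ≤ L / 2 * (η ^ 2 * (C * S)) := by
    have : 0 ≤ L / 2 * η ^ 2 := by positivity
    nlinarith [hDnorm]
  have : f (x - η • d) ≤ f x + -η * S + L / 2 * (η ^ 2 * (C * S)) := by linarith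
  have hsimp : -η * S + L / 2 * (η ^ 2 * (C * S)) = -(1 / (2 * C * L)) * S := by
    rw [hη]; field_simp; ring
  show f x - f (x - η • d) ≥ 1 / (2 * C * L) * S
  linarith
end

section
/- Let f : ℝⁿ → ℝ be convex and differentiable with L-Lipschitz Euclidean gradient, let g assign to each x a symmetric positive definite matrix g(x) with ‖u‖² ≤ C · uᵀ g(x) u for all x, u (𝔼-compatibility, C > 0), and let x* be a global minimizer of f. Define the natural gradient descent iterates x_{k+1} = x_k − (1/(CL)) g(x_k)⁻¹ ∇f(x_k) from an initial point x₀. Let T ≥ 1 be an integer and suppose R > 0 satisfies (x_k − x*)ᵀ g(x_k) (x_k − x*) ≤ R² for all 0 ≤ k < T. Then f(x_T) − f(x*) ≤ 2LCR²/T. -/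
open Matrix
open scoped RealInnerProductSpace

private lemma inner_eq_dot {n : ℕ} (u v : EuclideanSpace ℝ (Fin n)) : ⟪u, v⟫ = u ⬝ᵥ v := by
  simp [PiLp.inner_apply, dotProduct, mul_comm]


lemma ngd_descent {n : ℕ} (f : EuclideanSpace ℝ (Fin n) → ℝ) (hf : Differentiable ℝ f)
    (L : ℝ) (hL : 0 ≤ L)
    (hLip : ∀ x y : EuclideanSpace ℝ (Fin n), ‖gradient f x - gradient f y‖ ≤ L * ‖x - y‖)
    (x y : EuclideanSpace ℝ (Fin n)) :
    f y ≤ f x + ⟪gradient f x, y - x⟫ + L / 2 * ‖y - x‖ ^ 2 := by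
  set v := y - x with hv
  set γ : ℝ → EuclideanSpace ℝ (Fin n) := fun t => x + t • v with hγ
  have hγd : ∀ t : ℝ, HasDerivAt γ v t := fun t => by
    simpa [hγ] using ((hasDerivAt_id t).smul_const v).const_add x
  have hcont_grad : Continuous (gradient f) := by
    apply LipschitzWith.continuous (K := L.toNNReal)
    apply LipschitzWith.of_dist_le_mul
    intro a b
    simpa [dist_eq_norm, Real.coe_toNNReal _ hL] using hLip a b
  set φ' : ℝ → ℝ := fun t => ⟪gradient f (γ t), v⟫ with hφ'
  have hφd : ∀ t : ℝ, HasDerivAt (fun t => f (γ t)) (φ' t) t := by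
    intro t
    have h1 : HasGradientAt f (gradient f (γ t)) (γ t) := (hf (γ t)).hasGradientAt
    have h2 := h1.hasFDerivAt.comp_hasDerivAt t (hγd t)
    simpa [InnerProductSpace.toDual_apply_apply, hφ', Function.comp_def] using h2
  have hφ'cont : Continuous φ' := by
    apply Continuous.inner
    · exact hcont_grad.comp (continuous_const.add (continuous_id.smul continuous_const))
    · exact continuous_const
  have hftc : f (γ 1) - f (γ 0) = ∫ t in (0:ℝ)..1, φ' t := by
    rw [intervalIntegral.integral_eq_sub_of_hasDerivAt (fun t _ => hφd t)
      (hφ'cont.intervalIntegrable 0 1)]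
  have hbound : ∀ t ∈ Set.Icc (0:ℝ) 1, φ' t ≤ φ' 0 + L * ‖v‖ ^ 2 * t := by
    intro t ht
    have : φ' t - φ' 0 = ⟪gradient f (γ t) - gradient f (γ 0), v⟫ := by
      simp [hφ', inner_sub_left]
    have hcs : ⟪gradient f (γ t) - gradient f (γ 0), v⟫ ≤
        ‖gradient f (γ t) - gradient f (γ 0)‖ * ‖v‖ := real_inner_le_norm _ _
    have hlip' : ‖gradient f (γ t) - gradient f (γ 0)‖ ≤ L * (t * ‖v‖) := by
      have := hLip (γ t) (γ 0)
      have heq : γ t - γ 0 = t • v := by simp [hγ]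
      rw [heq] at this
      simpa [norm_smul, abs_of_nonneg ht.1] using this
    nlinarith [norm_nonneg v, mul_le_mul_of_nonneg_right hlip' (norm_nonneg v)]
  have hint : ∫ t in (0:ℝ)..1, φ' t ≤ ∫ t in (0:ℝ)..1, (φ' 0 + L * ‖v‖ ^ 2 * t) := by
    apply intervalIntegral.integral_mono_on zero_le_one (hφ'cont.intervalIntegrable 0 1)
    · exact ((continuous_const.add (continuous_const.mul continuous_id)).intervalIntegrable 0 1)
    · exact hbound
  have hval : ∫ t in (0:ℝ)..1, (φ' 0 + L * ‖v‖ ^ 2 * t) = φ' 0 + L / 2 * ‖v‖ ^ 2 := by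
    have i2 : IntervalIntegrable (fun t : ℝ => L * ‖v‖ ^ 2 * t) MeasureTheory.volume 0 1 :=
      Continuous.intervalIntegrable (by fun_prop) 0 1
    rw [intervalIntegral.integral_add intervalIntegrable_const i2,
      intervalIntegral.integral_const_mul, integral_id]
    simp
    ring
  have hγ1 : γ 1 = y := by simp [hγ, hv]
  have hγ0 : γ 0 = x := by simp [hγ]
  have hφ'0 : φ' 0 = ⟪gradient f x, v⟫ := by
    show (⟪gradient f (γ 0), v⟫ : ℝ) = _
    rw [hγ0]
  rw [hγ1, hγ0] at hftc
  linarith [hftc, hint.trans_eq hval]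

lemma ngd_convex_grad {n : ℕ} (f : EuclideanSpace ℝ (Fin n) → ℝ)
    (hconv : ConvexOn ℝ Set.univ f) (hf : Differentiable ℝ f)
    (x y : EuclideanSpace ℝ (Fin n)) :
    f x - f y ≤ ⟪gradient f x, x - y⟫ := by
  set v := y - x with hv
  set ψ : ℝ → ℝ := fun t => f (x + t • v) with hψ
  have hγd : HasDerivAt (fun t : ℝ => x + t • v) v 0 := by
    simpa using ((hasDerivAt_id (0:ℝ)).smul_const v).const_add x
  have hd : HasDerivAt ψ (⟪gradient f x, v⟫) 0 := by
    have h1 : HasGradientAt f (gradient f x) x := (hf x).hasGradientAt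
    have h0 : x + (0:ℝ) • v = x := by simp
    rw [← h0] at h1
    have h2 := h1.hasFDerivAt.comp_hasDerivAt 0 hγd
    simpa [InnerProductSpace.toDual_apply_apply, hψ, Function.comp_def] using h2
  have hslope : ∀ t : ℝ, t ∈ Set.Ioc (0:ℝ) 1 → (ψ t - ψ 0) / t ≤ f y - f x := by
    intro t ht
    have hxt : x + t • v = (1 - t) • x + t • y := by
      rw [hv]; module
    have hc := hconv.2 (Set.mem_univ x) (Set.mem_univ y)
      (by linarith [ht.2] : (0:ℝ) ≤ 1 - t) (le_of_lt ht.1) (by ring)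
    rw [smul_eq_mul, smul_eq_mul] at hc
    have hψt : ψ t ≤ (1 - t) * f x + t * f y := by rw [hψ]; simpa [hxt] using hc
    have hψ0 : ψ 0 = f x := by simp [hψ]
    rw [div_le_iff₀ ht.1]
    nlinarith [ht.1]
  have htend : Filter.Tendsto (fun t => (ψ t - ψ 0) / t) (nhdsWithin 0 (Set.Ioi 0))
      (nhds (⟪gradient f x, v⟫)) := by
    have := hasDerivAt_iff_tendsto_slope.1 hd
    have h2 := this.mono_left (nhdsWithin_mono 0 (by
      intro t ht
      exact Set.mem_compl_singleton_iff.2 (ne_of_gt ht)))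
    apply h2.congr'
    filter_upwards [self_mem_nhdsWithin] with t (ht : t ∈ Set.Ioi (0:ℝ))
    rw [slope_fun_def]
    simp only [sub_zero, vsub_eq_sub, smul_eq_mul]
    field_simp
  have hle : (⟪gradient f x, v⟫ : ℝ) ≤ f y - f x := by
    refine le_of_tendsto htend ?_
    filter_upwards [Ioc_mem_nhdsGT_of_mem (by norm_num : (0:ℝ) ∈ Set.Ico (0:ℝ) 1)] with t ht
    exact hslope t ht
  have : (⟪gradient f x, x - y⟫ : ℝ) = -⟪gradient f x, v⟫ := by
    rw [hv, ← inner_neg_right]; congr 1; abel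
  linarith [hle, this.le, this.ge]

lemma ngd_rec (a : ℝ) (ha : 0 < a) (T : ℕ) (δ : ℕ → ℝ) (hnn : ∀ k, 0 ≤ δ k)
    (hstep : ∀ k < T, δ (k + 1) ≤ δ k - a * δ k ^ 2) :
    ∀ k, 1 ≤ k → k ≤ T → a * k * δ k ≤ 1 := by
  intro k
  induction k with
  | zero => omega
  | succ m ih =>
    intro _ hmT
    rcases Nat.eq_zero_or_pos m with hm | hm
    · subst hm
      have h0 := hstep 0 (by omega)
      have := hnn 0
      have := hnn 1
      push_cast
      nlinarith [sq_nonneg (2 * a * δ 0 - 1)]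
    · have hkT : m ≤ T := by omega
      have hrec := ih hm hkT
      have h0 := hstep m (by omega)
      have hd : 0 ≤ δ m := hnn m
      have hd1 : 0 ≤ δ (m + 1) := hnn (m + 1)
      have hm1 : (1:ℝ) ≤ (m:ℝ) := by exact_mod_cast hm
      -- t = a * δ m satisfies m*t ≤ 1, t ≥ 0, t ≤ 1
      have ht1 : a * δ m ≤ 1 := by nlinarith
      push_cast
      have key := mul_le_mul_of_nonneg_left h0 (by positivity : (0:ℝ) ≤ a * ((m:ℝ) + 1))
      nlinarith [mul_nonneg (sub_nonneg.2 hrec) (sub_nonneg.2 ht1), sq_nonneg (a * δ m)]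

set_option maxHeartbeats 2000000 in
lemma ngd_step (n : ℕ) (f : EuclideanSpace ℝ (Fin n) → ℝ)
    (hconv : ConvexOn ℝ Set.univ f) (hf : Differentiable ℝ f)
    (L : ℝ) (hL : 0 < L)
    (g : EuclideanSpace ℝ (Fin n) → Matrix (Fin n) (Fin n) ℝ)
    (hgsym : ∀ x, (g x).IsSymm) (hgpos : ∀ x, (g x).PosDef)
    (C : ℝ) (hC : 0 < C)
    (hcompat : ∀ (x u : EuclideanSpace ℝ (Fin n)), ‖u‖ ^ 2 ≤ C * (u ⬝ᵥ (g x).mulVec u))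
    (xstar : EuclideanSpace ℝ (Fin n)) (hmin : ∀ y, f xstar ≤ f y)
    (x : ℕ → EuclideanSpace ℝ (Fin n))
    (hiter : ∀ (k : ℕ) (gr : EuclideanSpace ℝ (Fin n)), gr = gradient f (x k) →
      x (k + 1) = x k - (1 / (C * L)) •
        (show EuclideanSpace ℝ (Fin n) from WithLp.toLp 2 ((g (x k))⁻¹.mulVec gr)))
    (T : ℕ) (hT : 1 ≤ T) (R : ℝ) (hR : 0 < R)
    (hRbound : ∀ k < T,
      (x k - xstar) ⬝ᵥ (g (x k)).mulVec (x k - xstar) ≤ R ^ 2)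
    (descent : ∀ a b : EuclideanSpace ℝ (Fin n),
      f b ≤ f a + ⟪gradient f a, b - a⟫ + L / 2 * ‖b - a‖ ^ 2)
    (convgrad : ∀ a b : EuclideanSpace ℝ (Fin n), f a - f b ≤ ⟪gradient f a, a - b⟫)
    (innerdot : ∀ u v : EuclideanSpace ℝ (Fin n), (⟪u, v⟫ : ℝ) = u ⬝ᵥ v)
    (k : ℕ) (hk : k < T) :
    f (x (k + 1)) - f xstar ≤
      (f (x k) - f xstar) - (1 / (2 * C * L * R ^ 2)) * (f (x k) - f xstar) ^ 2 := by
  set M := g (x k) with hM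
  have hMsym := hgsym (x k)
  have hMpos := hgpos (x k)
  set G : EuclideanSpace ℝ (Fin n) := gradient f (x k) with hG
  set d : Fin n → ℝ := M⁻¹.mulVec G with hd
  obtain ⟨dE, hdE⟩ : ∃ y : EuclideanSpace ℝ (Fin n), y = WithLp.toLp 2 d := ⟨WithLp.toLp 2 d, rfl⟩
  have hstep_eq : x (k + 1) = x k - (1 / (C * L)) • dE := by
    rw [hdE]; exact hiter k G rfl
  have hgd : M.mulVec d = G := by
    rw [hd, Matrix.mulVec_mulVec, Matrix.mul_nonsing_inv _
      (isUnit_iff_ne_zero.2 hMpos.det_pos.ne'), Matrix.one_mulVec]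
  -- symmetry swap
  have hswap : ∀ u v : Fin n → ℝ, u ⬝ᵥ M.mulVec v = v ⬝ᵥ M.mulVec u := by
    intro u v
    rw [Matrix.dotProduct_mulVec, ← Matrix.mulVec_transpose, hMsym.eq, dotProduct_comm]
  have hpsd : ∀ u : Fin n → ℝ, 0 ≤ u ⬝ᵥ M.mulVec u := by
    intro u
    simpa using hMpos.posSemidef.re_dotProduct_nonneg u
  set s : ℝ := d ⬝ᵥ M.mulVec d with hs
  have hs0 : 0 ≤ s := hpsd d
  have hsG : d ⬝ᵥ (G : Fin n → ℝ) = s := by rw [hs, hgd]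
  -- the step vector
  have hdiff : x (k + 1) - x k = -((1 / (C * L)) • dE) := by
    rw [hstep_eq]; abel
  have hinner : (⟪G, x (k + 1) - x k⟫ : ℝ) = -(1 / (C * L)) * s := by
    rw [hdiff, inner_neg_right, real_inner_smul_right, innerdot, dotProduct_comm, hdE, WithLp.ofLp_toLp, hsG]
    ring
  have hnorm : ‖x (k + 1) - x k‖ ^ 2 = (1 / (C * L)) ^ 2 * ‖dE‖ ^ 2 := by
    rw [hdiff, norm_neg, norm_smul, mul_pow, Real.norm_eq_abs, sq_abs]
  have hcomp : ‖dE‖ ^ 2 ≤ C * s := by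
    have h0 := hcompat (x k) dE
    have hcs2 : (dE : Fin n → ℝ) ⬝ᵥ (g (x k)).mulVec dE = s := by rw [hdE, WithLp.ofLp_toLp, ← hM, hs]
    rw [hcs2] at h0
    exact h0
  -- descent step
  have hdescent : f (x (k + 1)) ≤ f (x k) - (1 / (2 * C * L)) * s := by
    have h1 := descent (x k) (x (k + 1))
    rw [← hG, hinner, hnorm] at h1
    have h2 : L / 2 * ((1 / (C * L)) ^ 2 * ‖dE‖ ^ 2) ≤ L / 2 * ((1 / (C * L)) ^ 2 * (C * s)) := by
      have : (0:ℝ) ≤ L / 2 * (1 / (C * L)) ^ 2 := by positivity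
      nlinarith [hcomp]
    have h3 : L / 2 * ((1 / (C * L)) ^ 2 * (C * s)) = (1 / (2 * C * L)) * s := by
      field_simp
    have h4 : -(1 / (C * L)) * s + (1 / (2 * C * L)) * s = -((1 / (2 * C * L)) * s) := by
      field_simp
      ring
    nlinarith [h1, h2]
  -- Cauchy-Schwarz in g-metric
  set v : Fin n → ℝ := x k - xstar with hv
  have hveq : (x k - xstar : EuclideanSpace ℝ (Fin n)) = v := rfl
  set A : ℝ := v ⬝ᵥ M.mulVec v with hA
  set B : ℝ := d ⬝ᵥ M.mulVec v with hB
  have hAR : A ≤ R ^ 2 := hRbound k hk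
  have hA0 : 0 ≤ A := hpsd v
  clear_value M G d s v A B
  have hq : ∀ t : ℝ, 0 ≤ A * (t * t) + (2 * B) * t + s := by
    intro t
    have h := hpsd (d + t • v)
    have hvd : v ⬝ᵥ M.mulVec d = B := by rw [hB, hswap]
    have hexp : (d + t • v) ⬝ᵥ M.mulVec (d + t • v)
        = s + t * B + (t * B + t * (t * A)) := by
      simp only [Matrix.mulVec_add, Matrix.mulVec_smul, dotProduct_add, add_dotProduct,
        smul_dotProduct, dotProduct_smul, smul_eq_mul]
      rw [hvd, ← hs, ← hA, ← hB]
      ring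
    rw [hexp] at h
    nlinarith [h]
  have hCS : B ^ 2 ≤ A * s := by
    have hd2 := discrim_le_zero hq
    rw [discrim] at hd2
    nlinarith [hd2]
  -- convexity
  have hconvk : f (x k) - f xstar ≤ B := by
    have h1 := convgrad (x k) xstar
    rw [← hG, innerdot, hveq, ← hgd, dotProduct_comm, hswap, ← hB] at h1
    exact h1
  have hδ0 : 0 ≤ f (x k) - f xstar := sub_nonneg.2 (hmin (x k))
  have hδs : (f (x k) - f xstar) ^ 2 ≤ R ^ 2 * s := by
    nlinarith [hCS, hconvk, hδ0, hA0, hAR, hs0]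
  -- combine
  have hcoef : (1 / (2 * C * L * R ^ 2)) * (f (x k) - f xstar) ^ 2 ≤ (1 / (2 * C * L)) * s := by
    rw [div_mul_eq_mul_div, div_le_iff₀ (by positivity)]
    have : (1 / (2 * C * L)) * ((f (x k) - f xstar) ^ 2) ≤ (1 / (2 * C * L)) * (R ^ 2 * s) := by
      have : (0:ℝ) ≤ 1 / (2 * C * L) := by positivity
      nlinarith [hδs]
    calc 1 * (f (x k) - f xstar) ^ 2 = (1 / (2 * C * L)) * ((f (x k) - f xstar) ^ 2) * (2 * C * L) := by
          field_simp
      _ ≤ (1 / (2 * C * L)) * (R ^ 2 * s) * (2 * C * L) := by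
          apply mul_le_mul_of_nonneg_right this (by positivity)
      _ = 1 / (2 * C * L) * s * (2 * C * L * R ^ 2) := by ring
  linarith [hdescent, hcoef]

/-- Convergence rate of natural gradient descent: for convex `f` with `L`-Lipschitz Euclidean
gradient, a metric `g` that is 𝔼-compatible with constant `C`, iterates
`x_{k+1} = x_k - (1/(CL)) g(x_k)⁻¹ ∇f(x_k)`, a global minimizer `x*`, and
`(x_k - x*)ᵀ g(x_k) (x_k - x*) ≤ R²` for all `k < T`, one has
`f(x_T) - f(x*) ≤ 2LCR²/T`. -/
theorem stmt_15 (n : ℕ) (f : EuclideanSpace ℝ (Fin n) → ℝ)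
    (hconv : ConvexOn ℝ Set.univ f) (hf : Differentiable ℝ f)
    (L : ℝ) (hL : 0 < L)
    (hLip : ∀ x y : EuclideanSpace ℝ (Fin n),
      ‖gradient f x - gradient f y‖ ≤ L * ‖x - y‖)
    (g : EuclideanSpace ℝ (Fin n) → Matrix (Fin n) (Fin n) ℝ)
    (hgsym : ∀ x, (g x).IsSymm) (hgpos : ∀ x, (g x).PosDef)
    (C : ℝ) (hC : 0 < C)
    (hcompat : ∀ (x u : EuclideanSpace ℝ (Fin n)), ‖u‖ ^ 2 ≤ C * (u ⬝ᵥ (g x).mulVec u))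
    (xstar : EuclideanSpace ℝ (Fin n)) (hmin : ∀ y, f xstar ≤ f y)
    (x : ℕ → EuclideanSpace ℝ (Fin n))
    (hiter : ∀ (k : ℕ) (gr : EuclideanSpace ℝ (Fin n)), gr = gradient f (x k) →
      x (k + 1) = x k - (1 / (C * L)) •
        (show EuclideanSpace ℝ (Fin n) from WithLp.toLp 2 ((g (x k))⁻¹.mulVec gr)))
    (T : ℕ) (hT : 1 ≤ T) (R : ℝ) (hR : 0 < R)
    (hRbound : ∀ k < T,
      (x k - xstar) ⬝ᵥ (g (x k)).mulVec (x k - xstar) ≤ R ^ 2) :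
    f (x T) - f xstar ≤ 2 * L * C * R ^ 2 / T := by
  have descent := ngd_descent f hf L hL.le hLip
  have convgrad := ngd_convex_grad f hconv hf
  have innerdot : ∀ u v : EuclideanSpace ℝ (Fin n), (⟪u, v⟫ : ℝ) = u ⬝ᵥ v :=
    fun u v => inner_eq_dot u v
  have hstepineq : ∀ k < T, f (x (k + 1)) - f xstar ≤
      (f (x k) - f xstar) - (1 / (2 * C * L * R ^ 2)) * (f (x k) - f xstar) ^ 2 :=
    fun k hk => ngd_step n f hconv hf L hL g hgsym hgpos C hC hcompat xstar hmin x hiter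
      T hT R hR hRbound descent convgrad innerdot k hk
  have hrec := ngd_rec (1 / (2 * C * L * R ^ 2)) (by positivity) T
    (fun k => f (x k) - f xstar) (fun k => sub_nonneg.2 (hmin (x k))) hstepineq
    T hT le_rfl
  have hTpos : (0:ℝ) < T := by exact_mod_cast Nat.lt_of_lt_of_le Nat.zero_lt_one hT
  have key : (f (x T) - f xstar) * T ≤ 2 * L * C * R ^ 2 := by
    have h2 := mul_le_mul_of_nonneg_right hrec (by positivity : (0:ℝ) ≤ 2 * C * L * R ^ 2)
    calc (f (x T) - f xstar) * T
        = 1 / (2 * C * L * R ^ 2) * T * (f (x T) - f xstar) * (2 * C * L * R ^ 2) := by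
          field_simp
      _ ≤ 1 * (2 * C * L * R ^ 2) := h2
      _ = 2 * L * C * R ^ 2 := by ring
  exact (le_div_iff₀ hTpos).2 key
end

section
/- Let H be a real Hilbert space, U, V ⊆ ℝᵏ open sets, α : V → U a C¹ diffeomorphism, and φ : U → H continuously Fréchet differentiable. For u ∈ U define the pullback metric matrix G_φ(u) with entries G_φ(u)_{ij} = ⟨∂_iφ(u), ∂_jφ(u)⟩_H, and for x ∈ V define G_{φ∘α}(x) with entries ⟨∂_i(φ∘α)(x), ∂_j(φ∘α)(x)⟩_H. Then ∫_V √(det G_{φ∘α}(x)) dx = ∫_U √(det G_φ(u)) du, as an equality of (possibly infinite) Lebesgue integrals of nonnegative functions. Consequently, the ε-flatness of a loss function near a minimum, defined as the pullback-metric volume ∫_S √(det G_φ) of a maximal connected set S on which the loss exceeds its minimum by less than ε, is independent of the choice of coordinates on the parameter space. -/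
open scoped RealInnerProductSpace
open MeasureTheory

/-- Coordinate invariance of the pullback-metric volume (hence of ε-flatness): for a C¹
diffeomorphism `α : V → U` (with C¹ inverse `β`) and a C¹ map `φ : U → H`, the volume of
the pullback metric computed in the `V`-coordinates of `φ ∘ α` equals the volume computed
in the `U`-coordinates of `φ`:
`∫_V √(det G_{φ∘α}) = ∫_U √(det G_φ)`, as (possibly infinite) Lebesgue integrals. -/
theorem stmt_18 {H : Type*} [NormedAddCommGroup H] [InnerProductSpace ℝ H]
    (k : ℕ) (U V : Set (EuclideanSpace ℝ (Fin k))) (hU : IsOpen U) (hV : IsOpen V)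
    (α : EuclideanSpace ℝ (Fin k) → EuclideanSpace ℝ (Fin k))
    (hbij : Set.BijOn α V U) (hα : ContDiffOn ℝ 1 α V)
    (β : EuclideanSpace ℝ (Fin k) → EuclideanSpace ℝ (Fin k))
    (hβinv : ∀ x ∈ V, β (α x) = x) (hβ : ContDiffOn ℝ 1 β U)
    (φ : EuclideanSpace ℝ (Fin k) → H) (hφ : ContDiffOn ℝ 1 φ U) :
    ∫⁻ x in V, ENNReal.ofReal (Real.sqrt (Matrix.det (Matrix.of fun i j =>
        ⟪fderiv ℝ (φ ∘ α) x (EuclideanSpace.single i 1),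
          fderiv ℝ (φ ∘ α) x (EuclideanSpace.single j 1)⟫)))
      = ∫⁻ u in U, ENNReal.ofReal (Real.sqrt (Matrix.det (Matrix.of fun i j =>
        ⟪fderiv ℝ φ u (EuclideanSpace.single i 1),
          fderiv ℝ φ u (EuclideanSpace.single j 1)⟫))) := by
  have hUimg : α '' V = U := hbij.image_eq
  have key := MeasureTheory.lintegral_image_eq_lintegral_abs_det_fderiv_mul
    (μ := volume) hV.measurableSet
    (f' := fun x => fderiv ℝ α x)
    (fun x hx => ((hα.differentiableOn one_ne_zero x hx).differentiableAt
        (hV.mem_nhds hx)).hasFDerivAt.hasFDerivWithinAt)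
    hbij.injOn
    (fun u => ENNReal.ofReal (Real.sqrt (Matrix.det (Matrix.of fun i j =>
        ⟪fderiv ℝ φ u (EuclideanSpace.single i 1),
          fderiv ℝ φ u (EuclideanSpace.single j 1)⟫))))
  rw [hUimg] at key
  rw [key]
  refine setLIntegral_congr_fun hV.measurableSet (fun x hx => ?_)
  have hαx : α x ∈ U := hbij.mapsTo hx
  have hαd : DifferentiableAt ℝ α x :=
    (hα.differentiableOn one_ne_zero x hx).differentiableAt (hV.mem_nhds hx)
  have hφd : DifferentiableAt ℝ φ (α x) :=
    (hφ.differentiableOn one_ne_zero _ hαx).differentiableAt (hU.mem_nhds hαx)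
  have hcomp : fderiv ℝ (φ ∘ α) x = (fderiv ℝ φ (α x)).comp (fderiv ℝ α x) :=
    fderiv_comp x hφd hαd
  set A : Matrix (Fin k) (Fin k) ℝ :=
    Matrix.of fun i j => (fderiv ℝ α x (EuclideanSpace.single j 1)) i with hA
  set w : Fin k → H := fun i => fderiv ℝ φ (α x) (EuclideanSpace.single i 1) with hw
  set G : Matrix (Fin k) (Fin k) ℝ := Matrix.of fun p q => ⟪w p, w q⟫ with hGdef
  have hexp : ∀ v : EuclideanSpace ℝ (Fin k), v = ∑ i, v i • EuclideanSpace.single i 1 := by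
    intro v
    have := (EuclideanSpace.basisFun (Fin k) ℝ).sum_repr v
    simp [EuclideanSpace.basisFun_apply, EuclideanSpace.basisFun_repr] at this
    exact this.symm
  have happ : ∀ j, fderiv ℝ (φ ∘ α) x (EuclideanSpace.single j 1) = ∑ i, A i j • w i := by
    intro j
    rw [hcomp, ContinuousLinearMap.comp_apply,
      hexp (fderiv ℝ α x (EuclideanSpace.single j 1)), map_sum]
    simp [hA, hw]
  have hG : (Matrix.of fun i j => ⟪fderiv ℝ (φ ∘ α) x (EuclideanSpace.single i 1),
      fderiv ℝ (φ ∘ α) x (EuclideanSpace.single j 1)⟫) = A.transpose * G * A := by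
    ext i j
    simp only [Matrix.of_apply, happ, sum_inner, inner_sum, real_inner_smul_left,
      real_inner_smul_right, Matrix.mul_apply, Matrix.transpose_apply, Finset.sum_mul,
      Finset.mul_sum, hGdef]
    refine Finset.sum_congr rfl fun p _ => Finset.sum_congr rfl fun q _ => ?_
    rw [real_inner_comm]
    ring
  have hdetA : A.det = (fderiv ℝ α x).det := by
    have : A = LinearMap.toMatrix (EuclideanSpace.basisFun (Fin k) ℝ).toBasis
        (EuclideanSpace.basisFun (Fin k) ℝ).toBasis (fderiv ℝ α x).toLinearMap := by
      ext i j
      simp [LinearMap.toMatrix_apply, EuclideanSpace.basisFun_apply,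
        EuclideanSpace.basisFun_repr, hA]
    rw [this, LinearMap.det_toMatrix]
  rw [hG, Matrix.det_mul, Matrix.det_mul, Matrix.det_transpose]
  have hsq : A.det * G.det * A.det = A.det ^ 2 * G.det := by ring
  rw [hsq, Real.sqrt_mul (sq_nonneg _), Real.sqrt_sq_eq_abs, hdetA,
    ENNReal.ofReal_mul (abs_nonneg _)]
end
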